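/- arXiv:1012.0867 — 3 statements merged into one kernel-verified Lean document; each statement's English description precedes it below -/
import Mathlib

section
/- Let s ∈ (0,1) and a = 1-2s. The Poisson kernel P_s(x,y) = p_{n,s} · y^{1-a} / (|x|^2 + y^2)^{(n+1-a)/2} satisfies div(y^a ∇P_s) = 0 pointwise in the open upper half-space R^{n+1}_+ = {(x,y) : x ∈ R^n, y > 0}. -/
open Set Filter

/-- Tangential Laplacian `Δ_x u(x,y)` of `u : ℝ^n × (0,∞) → ℝ`, computed coordinatewise. -/
noncomputable def lapX (n : ℕ) (u : EuclideanSpace ℝ (Fin n) → ℝ → ℝ)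
    (x : EuclideanSpace ℝ (Fin n)) (y : ℝ) : ℝ :=
  ∑ i : Fin n, deriv (fun t : ℝ =>
    deriv (fun t' : ℝ => u (x + t' • EuclideanSpace.single i (1 : ℝ)) y) t) 0

/-- derivative of `C / g ^ β` when `g` is everywhere positive. -/
lemma hasDerivAt_div_rpow (C β : ℝ) {g : ℝ → ℝ} {g' t : ℝ}
    (hg : HasDerivAt g g' t) (hpos : ∀ u, 0 < g u) :
    HasDerivAt (fun u => C / g u ^ β) (C * (-β) * g t ^ (-β - 1) * g') t := by
  have h1 : HasDerivAt (fun u => C * g u ^ (-β)) (C * (g' * (-β) * g t ^ (-β - 1))) t :=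
    (hg.rpow_const (Or.inl (hpos t).ne')).const_mul C
  have heq : (fun u => C / g u ^ β) = fun u => C * g u ^ (-β) := by
    funext u
    rw [Real.rpow_neg (hpos u).le, div_eq_mul_inv]
  rw [heq]
  convert h1 using 1; ring

/-- Let `s ∈ (0,1)`, `a = 1-2s`. The Poisson kernel
`P_s(x,y) = p · y^{1-a} / (|x|² + y²)^{(n+1-a)/2}` satisfies
`div(y^a ∇P_s) = y^a Δ_x P_s + ∂_y(y^a ∂_y P_s) = 0` pointwise in the open upper
half-space `{y > 0}`. -/
theorem poisson_kernel_solves_La (n : ℕ) (s a p : ℝ) (hs : s ∈ Ioo (0 : ℝ) 1)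
    (ha : a = 1 - 2 * s) (hp : 0 < p)
    (P : EuclideanSpace ℝ (Fin n) → ℝ → ℝ)
    (hP : ∀ x y, P x y = p * y ^ (1 - a) / (‖x‖ ^ 2 + y ^ 2) ^ (((n : ℝ) + 1 - a) / 2)) :
    ∀ (x : EuclideanSpace ℝ (Fin n)) (y : ℝ), 0 < y →
      y ^ a * lapX n P x y + deriv (fun t : ℝ => t ^ a * deriv (fun t' : ℝ => P x t') t) y
        = 0 := by
  intro x y hy
  obtain ⟨hs0, hs1⟩ := hs
  set β : ℝ := ((n : ℝ) + 1 - a) / 2 with hβ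
  set N : ℝ := ‖x‖ ^ 2 with hN
  set q : ℝ := N + y ^ 2 with hq
  have hq0 : 0 < q := by rw [hq, hN]; positivity
  set C : ℝ := p * y ^ (1 - a) * (-β) with hC
  have hsum : ∑ i : Fin n, (x i) ^ 2 = N := by
    rw [hN, EuclideanSpace.norm_eq, Real.sq_sqrt (by positivity)]
    simp [sq_abs]
  have hrel : q ^ (-β - 1) = q ^ (-β - 1 - 1) * q := by
    have h := Real.rpow_add hq0 (-β - 1 - 1) 1
    rw [Real.rpow_one] at h
    rw [← h]; ring_nf
  ------------------------------------------------------------------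
  -- tangential part
  ------------------------------------------------------------------
  have hterm : ∀ i : Fin n,
      deriv (fun t : ℝ =>
        deriv (fun t' : ℝ => P (x + t' • EuclideanSpace.single i (1 : ℝ)) y) t) 0
      = C * ((2 * x i) * (-β - 1) * q ^ (-β - 1 - 1) * (2 * x i) + q ^ (-β - 1) * 2) := by
    intro i
    set v : ℝ → ℝ := fun t => q + 2 * x i * t + t ^ 2 with hv
    have hvnorm : ∀ t : ℝ, ‖x + t • EuclideanSpace.single i (1 : ℝ)‖ ^ 2 + y ^ 2 = v t := by
      intro t
      rw [hv, hq, hN]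
      simp only [norm_add_sq_real, real_inner_smul_right,
        EuclideanSpace.inner_single_right, norm_smul, EuclideanSpace.norm_single,
        RCLike.conj_to_real, norm_one, Real.norm_eq_abs, mul_pow, sq_abs]
      ring
    have hvpos : ∀ t : ℝ, 0 < v t := by
      intro t
      rw [← hvnorm t]
      have h1 : (0:ℝ) < y ^ 2 := pow_pos hy 2
      have h2 : (0:ℝ) ≤ ‖x + t • EuclideanSpace.single i (1:ℝ)‖ ^ 2 := sq_nonneg _
      linarith
    have hvd : ∀ t : ℝ, HasDerivAt v (2 * x i + 2 * t) t := by
      intro t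
      have h := (((hasDerivAt_id t).const_mul (2 * x i)).const_add q).add
        (hasDerivAt_pow 2 t)
      refine h.congr_deriv ?_
      push_cast; ring
    have hfun : (fun t' : ℝ => P (x + t' • EuclideanSpace.single i (1 : ℝ)) y)
        = fun t' => p * y ^ (1 - a) / v t' ^ β := by
      funext t'
      rw [hP]
      rw [show ‖x + t' • EuclideanSpace.single i (1:ℝ)‖ ^ 2 + y ^ 2 = v t' from hvnorm t']
    have hd1 : ∀ t : ℝ,
        HasDerivAt (fun t' : ℝ => P (x + t' • EuclideanSpace.single i (1 : ℝ)) y)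
          (C * (v t ^ (-β - 1) * (2 * x i + 2 * t))) t := by
      intro t
      rw [hfun]
      have h := hasDerivAt_div_rpow (p * y ^ (1 - a)) β (hvd t) hvpos
      convert h using 1
      rw [hC]; ring
    have hdfun : (fun t : ℝ =>
        deriv (fun t' : ℝ => P (x + t' • EuclideanSpace.single i (1 : ℝ)) y) t)
        = fun t => C * (v t ^ (-β - 1) * (2 * x i + 2 * t)) := by
      funext t; exact (hd1 t).deriv
    rw [hdfun]
    have hv0 : v 0 = q := by rw [hv]; ring
    have hA : HasDerivAt (fun t : ℝ => v t ^ (-β - 1))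
        ((2 * x i + 2 * 0) * (-β - 1) * q ^ (-β - 1 - 1)) 0 := by
      have h := (hvd 0).rpow_const (p := -β - 1) (Or.inl (by rw [hv0]; exact hq0.ne'))
      rwa [hv0] at h
    have hB : HasDerivAt (fun t : ℝ => 2 * x i + 2 * t) 2 0 := by
      have h := ((hasDerivAt_id (0 : ℝ)).const_mul 2).const_add (2 * x i)
      refine h.congr_deriv ?_; ring
    have hAB := (hA.mul hB).const_mul C
    rw [HasDerivAt.deriv (f := fun t => C * (v t ^ (-β - 1) * (2 * x i + 2 * t))) hAB, hv0]
    ring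
  ------------------------------------------------------------------
  -- vertical part
  ------------------------------------------------------------------
  set Q : ℝ → ℝ := fun t => N + t ^ 2 with hQ
  have hQd : ∀ t : ℝ, HasDerivAt Q (2 * t) t := by
    intro t
    have h := (hasDerivAt_pow 2 t).const_add N
    refine h.congr_deriv ?_
    push_cast; ring
  have hQpos : ∀ t : ℝ, 0 < t → 0 < Q t := by
    intro t ht
    have : Q t = N + t ^ 2 := rfl
    rw [this, hN]; positivity
  have hPd : ∀ t : ℝ, 0 < t →
      HasDerivAt (fun t' : ℝ => P x t')
        (p * ((1 - a) * t ^ (1 - a - 1) * Q t ^ (-β) +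
          t ^ (1 - a) * (2 * t * (-β) * Q t ^ (-β - 1)))) t := by
    intro t ht
    have h1 : HasDerivAt (fun t' : ℝ => t' ^ (1 - a)) ((1 - a) * t ^ (1 - a - 1)) t :=
      Real.hasDerivAt_rpow_const (Or.inl ht.ne')
    have h2 : HasDerivAt (fun t' : ℝ => Q t' ^ (-β)) (2 * t * (-β) * Q t ^ (-β - 1)) t :=
      (hQd t).rpow_const (Or.inl (hQpos t ht).ne')
    have h := (h1.mul h2).const_mul p
    have heq : (fun t' : ℝ => P x t') =ᶠ[nhds t] fun u => p * (u ^ (1 - a) * Q u ^ (-β)) := by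
      filter_upwards [Ioi_mem_nhds ht] with u hu
      rw [hP]
      have hu0 : (0:ℝ) < u := hu
      have hb : (0:ℝ) < ‖x‖ ^ 2 + u ^ 2 :=
        add_pos_of_nonneg_of_pos (sq_nonneg _) (pow_pos hu0 2)
      have : Q u = ‖x‖ ^ 2 + u ^ 2 := by rw [hQ]
      rw [this, Real.rpow_neg hb.le, div_eq_mul_inv, mul_assoc]
    exact (h.congr_of_eventuallyEq heq).congr_deriv (by ring)
  -- the function t ↦ t^a * ∂_y P equals a nicer function on Ioi 0
  have hkeq : (fun t : ℝ => t ^ a * deriv (fun t' : ℝ => P x t') t)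
      =ᶠ[nhds y] fun t => p * ((1 - a) * Q t ^ (-β) - 2 * β * t ^ 2 * Q t ^ (-β - 1)) := by
    filter_upwards [Ioi_mem_nhds hy] with t ht
    rw [(hPd t ht).deriv]
    have e1 : t ^ a * t ^ (1 - a - 1) = 1 := by
      rw [← Real.rpow_add ht]; norm_num
    have e2 : t ^ a * t ^ (1 - a) = t := by
      rw [← Real.rpow_add ht]
      norm_num
    calc t ^ a * (p * ((1 - a) * t ^ (1 - a - 1) * Q t ^ (-β) +
            t ^ (1 - a) * (2 * t * (-β) * Q t ^ (-β - 1))))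
        = p * ((1 - a) * (t ^ a * t ^ (1 - a - 1)) * Q t ^ (-β) +
            (t ^ a * t ^ (1 - a)) * t * (2 * (-β) * Q t ^ (-β - 1))) := by ring
      _ = p * ((1 - a) * Q t ^ (-β) - 2 * β * t ^ 2 * Q t ^ (-β - 1)) := by
          rw [e1, e2]; ring
  have hQy : Q y = q := by rw [hQ]
  have hk' : HasDerivAt (fun t : ℝ => p * ((1 - a) * Q t ^ (-β) - 2 * β * t ^ 2 * Q t ^ (-β - 1)))
      (p * ((1 - a) * (2 * y * (-β) * q ^ (-β - 1)) -
        2 * β * ((2 * y) * q ^ (-β - 1) + y ^ 2 * (2 * y * (-β - 1) * q ^ (-β - 1 - 1))))) y := by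
    have h1 : HasDerivAt (fun t : ℝ => Q t ^ (-β)) (2 * y * (-β) * q ^ (-β - 1)) y := by
      have := (hQd y).rpow_const (p := -β) (Or.inl (by rw [hQy]; exact hq0.ne'))
      rwa [hQy] at this
    have h2 : HasDerivAt (fun t : ℝ => Q t ^ (-β - 1)) (2 * y * (-β - 1) * q ^ (-β - 1 - 1)) y := by
      have := (hQd y).rpow_const (p := -β - 1) (Or.inl (by rw [hQy]; exact hq0.ne'))
      rwa [hQy] at this
    have h3 : HasDerivAt (fun t : ℝ => t ^ 2 * Q t ^ (-β - 1))
        ((2 * y) * q ^ (-β - 1) + y ^ 2 * (2 * y * (-β - 1) * q ^ (-β - 1 - 1))) y := by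
      have := (hasDerivAt_pow 2 y).mul h2
      have hQy' : Q y ^ (-β - 1) = q ^ (-β - 1) := by rw [hQy]
      rw [hQy'] at this
      refine this.congr_deriv ?_
      push_cast; ring
    have := ((h1.const_mul (1 - a)).sub ((h3.const_mul β).const_mul 2)).const_mul p
    refine (this.congr_deriv (by ring)).congr_of_eventuallyEq (Filter.Eventually.of_forall fun t => ?_)
    simp only [Pi.sub_apply]; ring
  have hder : deriv (fun t : ℝ => t ^ a * deriv (fun t' : ℝ => P x t') t) y
      = p * ((1 - a) * (2 * y * (-β) * q ^ (-β - 1)) -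
        2 * β * ((2 * y) * q ^ (-β - 1) + y ^ 2 * (2 * y * (-β - 1) * q ^ (-β - 1 - 1)))) := by
    rw [hkeq.deriv_eq, hk'.deriv]
  ------------------------------------------------------------------
  -- assemble
  ------------------------------------------------------------------
  have hlap : lapX n P x y
      = C * (-β - 1) * q ^ (-β - 1 - 1) * 4 * N + (n : ℝ) * (C * (q ^ (-β - 1) * 2)) := by
    rw [lapX]
    calc (∑ i : Fin n, deriv (fun t : ℝ =>
          deriv (fun t' : ℝ => P (x + t' • EuclideanSpace.single i (1 : ℝ)) y) t) 0)
        = ∑ i : Fin n, (C * (-β - 1) * q ^ (-β - 1 - 1) * 4 * (x i) ^ 2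
            + C * (q ^ (-β - 1) * 2)) := by
          refine Finset.sum_congr rfl fun i _ => ?_
          rw [hterm i]; ring
      _ = _ := by
          rw [Finset.sum_add_distrib, ← Finset.mul_sum, hsum, Finset.sum_const,
            Finset.card_univ, Fintype.card_fin, nsmul_eq_mul]
  rw [hlap, hder]
  have hyy : y ^ a * y ^ (1 - a) = y := by
    rw [← Real.rpow_add hy]; norm_num
  have key : y ^ a * (C * (-β - 1) * q ^ (-β - 1 - 1) * 4 * N
        + (n : ℝ) * (C * (q ^ (-β - 1) * 2)))
      = (y ^ a * y ^ (1 - a)) * (p * (-β) * ((-β - 1) * q ^ (-β - 1 - 1) * 4 * N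
        + (n : ℝ) * (q ^ (-β - 1) * 2))) := by
    rw [hC]; ring
  rw [key, hyy, hrel, hβ, hq]
  ring
end

section
/- Let f : R → R be continuously differentiable. Suppose v : R → R is a bounded C^2 layer solution of -v'' = f(v) on R, i.e. v' > 0 on R and v(x) → ±1 as x → ±∞. Then, with G' = -f, the Hamiltonian identity (1/2)(v'(x))^2 = G(v(x)) - G(1) holds for all x ∈ R; in particular G(1) = G(-1) and G > G(1) on (-1,1). -/
open Set Filter Topology

private lemma aux_top (v : ℝ → ℝ) (hv : Differentiable ℝ v) (c : ℝ) (hc : 0 < c)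
    (N : ℝ) (hd : ∀ x, N ≤ x → c ≤ deriv v x)
    (hlim : Tendsto v atTop (𝓝 (1:ℝ))) : False := by
  have hgd : Differentiable ℝ (fun x : ℝ => v x - c * x) :=
    hv.sub (differentiable_id.const_mul c)
  have hgderiv : ∀ x : ℝ, deriv (fun x : ℝ => v x - c * x) x = deriv v x - c := by
    intro x
    have : HasDerivAt (fun x : ℝ => v x - c * x) (deriv v x - c) x := by
      have h := (hv x).hasDerivAt.sub ((hasDerivAt_id x).const_mul c)
      simp only [id_eq, mul_one] at h
      exact h
    exact this.deriv
  have hg : MonotoneOn (fun x : ℝ => v x - c * x) (Ici N) := by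
    apply monotoneOn_of_deriv_nonneg (convex_Ici N) hgd.continuous.continuousOn
      (hgd.differentiableOn.mono interior_subset)
    intro x hx
    rw [interior_Ici] at hx
    rw [hgderiv x]
    linarith [hd x hx.le]
  obtain ⟨M, hM⟩ := eventually_atTop.mp (hlim.eventually (gt_mem_nhds (by norm_num : (1:ℝ) < 2)))
  set x0 := max (max N M) (N + (2 - v N)/c) with hx0
  have hN : N ≤ x0 := le_trans (le_max_left N M) (le_max_left _ _)
  have hMle : M ≤ x0 := le_trans (le_max_right N M) (le_max_left _ _)
  have h1 : v N - c * N ≤ v x0 - c * x0 := hg self_mem_Ici hN hN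
  have h2 : N + (2 - v N)/c ≤ x0 := le_max_right _ _
  have h3 : 2 - v N ≤ (x0 - N) * c := by
    rw [← div_le_iff₀ hc]; linarith
  have h4 := hM x0 hMle
  nlinarith

private lemma aux_bot (v : ℝ → ℝ) (hv : Differentiable ℝ v) (c : ℝ) (hc : 0 < c)
    (N : ℝ) (hd : ∀ x, x ≤ N → c ≤ deriv v x)
    (hlim : Tendsto v atBot (𝓝 (-1:ℝ))) : False := by
  have hgd : Differentiable ℝ (fun x : ℝ => v x - c * x) :=
    hv.sub (differentiable_id.const_mul c)
  have hgderiv : ∀ x : ℝ, deriv (fun x : ℝ => v x - c * x) x = deriv v x - c := by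
    intro x
    have : HasDerivAt (fun x : ℝ => v x - c * x) (deriv v x - c) x := by
      have h := (hv x).hasDerivAt.sub ((hasDerivAt_id x).const_mul c)
      simp only [id_eq, mul_one] at h
      exact h
    exact this.deriv
  have hg : MonotoneOn (fun x : ℝ => v x - c * x) (Iic N) := by
    apply monotoneOn_of_deriv_nonneg (convex_Iic N) hgd.continuous.continuousOn
      (hgd.differentiableOn.mono interior_subset)
    intro x hx
    rw [interior_Iic] at hx
    rw [hgderiv x]
    linarith [hd x hx.le]
  obtain ⟨M, hM⟩ := eventually_atBot.mp (hlim.eventually (lt_mem_nhds (by norm_num : (-2:ℝ) < -1)))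
  set x0 := min (min N M) (N + (-2 - v N)/c) with hx0
  have hN : x0 ≤ N := le_trans (min_le_left _ _) (min_le_left N M)
  have hMle : x0 ≤ M := le_trans (min_le_left _ _) (min_le_right N M)
  have h1 : v x0 - c * x0 ≤ v N - c * N := hg hN self_mem_Iic hN
  have h2 : x0 ≤ N + (-2 - v N)/c := min_le_right _ _
  have h3 : (x0 - N) * c ≤ -2 - v N := by
    rw [← le_div_iff₀ hc]; linarith
  have h4 := hM x0 hMle
  nlinarith

/-- Let `f` be `C¹` and let `v` be a bounded `C²` layer solution of `-v'' = f(v)` on `ℝ`,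
i.e. `v' > 0` and `v(x) → ±1` as `x → ±∞`. Then, with `G' = -f`, the Hamiltonian
identity `(1/2)(v')² = G(v) - G(1)` holds everywhere; in particular `G(1) = G(-1)` and
`G > G(1)` on `(-1,1)`. -/
theorem hamiltonian_identity_ODE (f G v : ℝ → ℝ)
    (hf : ContDiff ℝ 1 f) (hv : ContDiff ℝ 2 v)
    (hbdd : ∃ M : ℝ, ∀ x, |v x| ≤ M)
    (hG : ∀ t, HasDerivAt G (-(f t)) t)
    (heq : ∀ x, -(deriv (deriv v) x) = f (v x))
    (hmono : ∀ x, 0 < deriv v x)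
    (hlimtop : Tendsto v atTop (𝓝 1))
    (hlimbot : Tendsto v atBot (𝓝 (-1))) :
    (∀ x, (deriv v x) ^ 2 / 2 = G (v x) - G 1) ∧
    G 1 = G (-1) ∧
    (∀ t ∈ Ioo (-1 : ℝ) 1, G 1 < G t) := by
  have hdv : Differentiable ℝ v := hv.differentiable two_ne_zero
  have hdv' : Differentiable ℝ (deriv v) := by
    have h := (contDiff_succ_iff_deriv.mp (by exact_mod_cast hv : ContDiff ℝ ((1:ℕ)+1) v)).2
    exact h.2.differentiable one_ne_zero
  obtain ⟨K, hK⟩ : ∃ K : ℝ, K = (deriv v 0)^2/2 - G (v 0) := ⟨_, rfl⟩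
  have hE0 : ∀ x, HasDerivAt (fun x => (deriv v x)^2/2 - G (v x)) 0 x := by
    intro x
    have h1 : HasDerivAt v (deriv v x) x := (hdv x).hasDerivAt
    have h2 : HasDerivAt (deriv v) (deriv (deriv v) x) x := (hdv' x).hasDerivAt
    have h3 := (h2.pow 2).div_const 2
    have h4 := (hG (v x)).comp x h1
    have h5 := h3.sub h4
    refine h5.congr_deriv ?_
    have h6 : deriv (deriv v) x = -(f (v x)) := by linarith [heq x]
    rw [h6]; push_cast; ring
  have hconst : ∀ x, (deriv v x)^2/2 - G (v x) = K := by
    intro x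
    have := is_const_of_deriv_eq_zero (f := fun x => (deriv v x)^2/2 - G (v x))
      (fun y => (hE0 y).differentiableAt) (fun y => (hE0 y).deriv) x 0
    rw [hK]; exact this
  have hGcont : Continuous G := by
    rw [continuous_iff_continuousAt]; exact fun t => (hG t).continuousAt
  have hsq : ∀ x, (deriv v x)^2/2 = G (v x) + K := fun x => by linarith [hconst x]
  have hlimsq_top : Tendsto (fun x => (deriv v x)^2/2) atTop (𝓝 (G 1 + K)) := by
    have : Tendsto (fun x => G (v x) + K) atTop (𝓝 (G 1 + K)) :=
      ((hGcont.tendsto 1).comp hlimtop).add tendsto_const_nhds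
    exact this.congr (fun x => (hsq x).symm)
  have hlimsq_bot : Tendsto (fun x => (deriv v x)^2/2) atBot (𝓝 (G (-1) + K)) := by
    have : Tendsto (fun x => G (v x) + K) atBot (𝓝 (G (-1) + K)) :=
      ((hGcont.tendsto (-1)).comp hlimbot).add tendsto_const_nhds
    exact this.congr (fun x => (hsq x).symm)
  have hLtop : G 1 + K = 0 := by
    have hnonneg : 0 ≤ G 1 + K := ge_of_tendsto' hlimsq_top (fun x => by positivity)
    rcases eq_or_lt_of_le hnonneg with h | h
    · exact h.symm
    · exfalso
      have hev : ∀ᶠ x in atTop, (G 1 + K)/2 < (deriv v x)^2/2 :=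
        hlimsq_top.eventually (lt_mem_nhds (by linarith))
      obtain ⟨N, hN⟩ := eventually_atTop.mp hev
      set c := Real.sqrt (G 1 + K) with hcdef
      have hc : 0 < c := Real.sqrt_pos.mpr h
      refine aux_top v hdv c hc N (fun x hx => ?_) hlimtop
      have h1 := hN x hx
      have h2 := hmono x
      have h3 : c^2 < (deriv v x)^2 := by
        rw [hcdef, Real.sq_sqrt h.le]; linarith
      nlinarith
  have hLbot : G (-1) + K = 0 := by
    have hnonneg : 0 ≤ G (-1) + K := ge_of_tendsto' hlimsq_bot (fun x => by positivity)
    rcases eq_or_lt_of_le hnonneg with h | h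
    · exact h.symm
    · exfalso
      have hev : ∀ᶠ x in atBot, (G (-1) + K)/2 < (deriv v x)^2/2 :=
        hlimsq_bot.eventually (lt_mem_nhds (by linarith))
      obtain ⟨N, hN⟩ := eventually_atBot.mp hev
      set c := Real.sqrt (G (-1) + K) with hcdef
      have hc : 0 < c := Real.sqrt_pos.mpr h
      refine aux_bot v hdv c hc N (fun x hx => ?_) hlimbot
      have h1 := hN x hx
      have h2 := hmono x
      have h3 : c^2 < (deriv v x)^2 := by
        rw [hcdef, Real.sq_sqrt h.le]; linarith
      nlinarith
  have hid : ∀ x, (deriv v x) ^ 2 / 2 = G (v x) - G 1 := by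
    intro x; have := hsq x; linarith
  refine ⟨hid, by linarith, ?_⟩
  intro t ht
  obtain ⟨ht1, ht2⟩ := ht
  obtain ⟨b, hb⟩ := (hlimtop.eventually (lt_mem_nhds ht2)).exists
  obtain ⟨a, ha⟩ := (hlimbot.eventually (gt_mem_nhds ht1)).exists
  have hSM : StrictMono v := strictMono_of_deriv_pos hmono
  have hab : a ≤ b := le_of_lt (hSM.lt_iff_lt.mp (by linarith))
  have hIVT := intermediate_value_Icc hab hdv.continuous.continuousOn
  obtain ⟨x, _, hx⟩ := hIVT ⟨ha.le, hb.le⟩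
  have := hid x
  rw [hx] at this
  nlinarith [hmono x]
end

section
/- Let f be locally Lipschitz, let s ∈ (0,1), and suppose u is a continuous bounded function on the closed upper half-space with y^a u_y continuous up to {y=0} (a = 1-2s), satisfying div(y^a∇u) = 0 in R^{n+1}_+, ∂u/∂ν^a + d(x)u ≥ 0 on {y=0} for a bounded function d, u(x,0) → 0 as |x| → ∞, u(x,0) > 0 for x in some nonempty set H ⊂ R^n, and d(x) ≥ 0 for x ∉ H. Assume further the strong maximum principle and Hopf lemma for L_a (i.e., a nonconstant solution cannot attain an interior minimum, and at a boundary minimum point the conormal derivative ∂u/∂ν^a is strictly negative). Then u > 0 on the closed upper half-space. -/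
open Set Filter Topology

noncomputable section

variable (n : ℕ)

/-- Second tangential partial derivative `∂²_{x_i} u`. -/
def pdXX (i : Fin n) (u : EuclideanSpace ℝ (Fin n) × ℝ → ℝ)
    (q : EuclideanSpace ℝ (Fin n) × ℝ) : ℝ :=
  deriv (fun t : ℝ => deriv (fun t' : ℝ =>
    u (q.1 + t' • EuclideanSpace.single i (1 : ℝ), q.2)) t) 0

/-- Normal partial derivative `∂_y u`. -/
def pdY (u : EuclideanSpace ℝ (Fin n) × ℝ → ℝ) (q : EuclideanSpace ℝ (Fin n) × ℝ) : ℝ :=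
  deriv (fun t : ℝ => u (q.1, t)) q.2

lemma aux_contDiffAt_two {f : ℝ → ℝ} {t₀ : ℝ} (h : ContDiffAt ℝ 2 f t₀) :
    (∀ᶠ t in 𝓝 t₀, DifferentiableAt ℝ f t) ∧ DifferentiableAt ℝ (deriv f) t₀ := by
  obtain ⟨U, hU, hfU⟩ := h.contDiffOn (le_refl _) (by norm_num)
  have hUo : IsOpen (interior U) := isOpen_interior
  have ht₀ : t₀ ∈ interior U := mem_interior_iff_mem_nhds.2 hU
  have hfU' : ContDiffOn ℝ (1+1) f (interior U) := by
    have : ((2:ℕ) : WithTop ℕ∞) = 1 + 1 := by norm_num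
    exact this ▸ hfU.mono interior_subset
  rw [contDiffOn_succ_iff_deriv_of_isOpen hUo] at hfU'
  obtain ⟨hdiff, -, hderiv⟩ := hfU'
  constructor
  · filter_upwards [hUo.mem_nhds ht₀] with t ht
    exact (hdiff t ht).differentiableAt (hUo.mem_nhds ht)
  · exact ((hderiv.differentiableOn one_ne_zero) t₀ ht₀).differentiableAt (hUo.mem_nhds ht₀)

lemma aux_second_deriv_test {f : ℝ → ℝ} {t₀ : ℝ} (hmin : IsLocalMin f t₀)
    (h : ContDiffAt ℝ 2 f t₀) : deriv f t₀ = 0 ∧ 0 ≤ deriv (deriv f) t₀ := by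
  obtain ⟨hf, hf'⟩ := aux_contDiffAt_two h
  have h0 : deriv f t₀ = 0 := hmin.deriv_eq_zero
  refine ⟨h0, ?_⟩
  by_contra hneg
  push_neg at hneg
  have hslope : Tendsto (slope (deriv f) t₀) (𝓝[≠] t₀) (𝓝 (deriv (deriv f) t₀)) := by
    have := hf'.hasDerivAt
    rwa [hasDerivAt_iff_tendsto_slope] at this
  -- eventually in 𝓝[>] t₀, slope < 0, hence deriv f t < 0
  have h1 : ∀ᶠ t in 𝓝[>] t₀, deriv f t < 0 := by
    have h2 : ∀ᶠ t in 𝓝[>] t₀, slope (deriv f) t₀ t < 0 := by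
      have := (hslope.mono_left (nhdsWithin_mono _ (fun t (ht : t ∈ Ioi t₀) => ne_of_gt ht))).eventually
        (tendsto_id.eventually_lt_const hneg)
      simpa using this.mono (fun t ht => ht)
    filter_upwards [h2, self_mem_nhdsWithin] with t ht (ht' : t₀ < t)
    have : slope (deriv f) t₀ t = (deriv f t - deriv f t₀) / (t - t₀) := slope_def_field ..
    rw [this, h0, sub_zero] at ht
    have := mul_neg_of_neg_of_pos ht (sub_pos.2 ht')
    rw [div_mul_cancel₀] at this
    · linarith
    · exact ne_of_gt (sub_pos.2 ht')
  -- pick η > 0 with good properties on (t₀, t₀+η]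
  obtain ⟨η₁, hη₁, hball⟩ := Metric.eventually_nhds_iff.1 (hf.and hmin)
  obtain ⟨η₂, hη₂, hIoo⟩ := mem_nhdsGT_iff_exists_Ioo_subset.1 h1
  set t₁ := min (t₀ + η₁/2) ((t₀ + η₂)/2) with ht₁def
  have hη₂' : t₀ < η₂ := hη₂
  have ht₁gt : t₀ < t₁ := by
    apply lt_min (by linarith)
    linarith
  have hsub : Icc t₀ t₁ ⊆ Metric.ball t₀ η₁ := by
    intro t ht
    rw [Metric.mem_ball, Real.dist_eq, abs_lt]
    have h1 := ht.1
    have h2 := ht.2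
    have : t₁ ≤ t₀ + η₁/2 := min_le_left _ _
    constructor <;> linarith
  have hsub2 : Ioo t₀ t₁ ⊆ Ioo t₀ η₂ := by
    intro t ht
    have : t₁ ≤ (t₀ + η₂)/2 := min_le_right _ _
    exact ⟨ht.1, by linarith [ht.2]⟩
  have hanti : StrictAntiOn f (Icc t₀ t₁) := by
    apply strictAntiOn_of_deriv_neg (convex_Icc _ _)
    · intro t ht
      exact ((hball (hsub ht)).1).continuousAt.continuousWithinAt
    · intro t ht
      rw [interior_Icc] at ht
      exact hIoo (hsub2 ht)
  have hlt : f t₁ < f t₀ := hanti (left_mem_Icc.2 ht₁gt.le) (right_mem_Icc.2 ht₁gt.le) ht₁gt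
  have hge : f t₀ ≤ f t₁ := (hball (hsub (right_mem_Icc.2 ht₁gt.le))).2
  linarith

lemma aux_line_smooth (u : EuclideanSpace ℝ (Fin n) × ℝ → ℝ)
    (husmooth : ContDiffOn ℝ 2 u {q : EuclideanSpace ℝ (Fin n) × ℝ | 0 < q.2})
    (A : ℝ → EuclideanSpace ℝ (Fin n) × ℝ) (hA : ContDiff ℝ 2 A)
    (t : ℝ) (ht : 0 < (A t).2) : ContDiffAt ℝ 2 (fun t' => u (A t')) t := by
  have hopen : IsOpen {q : EuclideanSpace ℝ (Fin n) × ℝ | 0 < q.2} :=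
    isOpen_lt continuous_const continuous_snd
  have h1 : ContDiffAt ℝ 2 u (A t) := husmooth.contDiffAt (hopen.mem_nhds ht)
  exact h1.comp t hA.contDiffAt

lemma aux_horiz (u : EuclideanSpace ℝ (Fin n) × ℝ → ℝ)
    (husmooth : ContDiffOn ℝ 2 u {q : EuclideanSpace ℝ (Fin n) × ℝ | 0 < q.2})
    (px : EuclideanSpace ℝ (Fin n)) (py : ℝ) (hY : 0 < py) (κ : ℝ) (i : Fin n)
    (hmin : ∀ t : ℝ, u (px, py) + κ * ‖px‖^2 ≤
      u (px + t • EuclideanSpace.single i (1:ℝ), py) +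
        κ * ‖px + t • EuclideanSpace.single i (1:ℝ)‖^2) :
    0 ≤ pdXX n i u (px, py) + 2 * κ := by
  set v : EuclideanSpace ℝ (Fin n) := EuclideanSpace.single i (1:ℝ) with hv
  have hvnorm : ‖v‖ = 1 := by rw [hv, EuclideanSpace.norm_single]; norm_num
  set c : ℝ := inner ℝ px v with hc
  set F : ℝ → ℝ := fun t => u (px + t • v, py) with hF
  set G : ℝ → ℝ := fun t => F t + κ * (t^2 + 2*c*t) with hG
  have hexp : ∀ t : ℝ, ‖px + t • v‖^2 = ‖px‖^2 + 2*c*t + t^2 := by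
    intro t
    rw [norm_add_sq_real, real_inner_smul_right, norm_smul, hvnorm, mul_one,
      Real.norm_eq_abs, sq_abs, ← hc]
    ring
  -- G has a local min at 0
  have hGmin : IsLocalMin G 0 := by
    apply Filter.Eventually.of_forall
    intro t
    have h1 := hmin t
    rw [hexp t] at h1
    have hF0 : F 0 = u (px, py) := by simp [hF]
    simp only [hG, hF0]
    ring_nf
    ring_nf at h1
    linarith
  -- smoothness of F
  have hFsmooth : ∀ t : ℝ, ContDiffAt ℝ 2 F t := by
    intro t
    exact aux_line_smooth n u husmooth (fun t => (px + t • v, py))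
      ((contDiff_const.add (contDiff_id.smul contDiff_const)).prodMk contDiff_const) t hY
  have hFd : ∀ t : ℝ, DifferentiableAt ℝ F t :=
    fun t => ((hFsmooth t).differentiableAt (by norm_num))
  have hFd' : DifferentiableAt ℝ (deriv F) 0 := (aux_contDiffAt_two (hFsmooth 0)).2
  -- smoothness of G
  have hGsmooth : ContDiffAt ℝ 2 G 0 := by
    apply (hFsmooth 0).add
    apply ContDiffAt.mul contDiffAt_const
    exact ContDiffAt.add (contDiffAt_id.pow 2) (ContDiffAt.mul contDiffAt_const contDiffAt_id)
  -- derivative of G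
  have hpoly : ∀ t : ℝ, HasDerivAt (fun t : ℝ => κ * (t^2 + 2*c*t)) (κ * (2*t + 2*c)) t := by
    intro t
    have h1 : HasDerivAt (fun t : ℝ => t^2 + 2*c*t) (2*t + 2*c) t := by
      have := ((hasDerivAt_pow 2 t).add ((hasDerivAt_id t).const_mul (2*c)))
      exact this.congr_deriv (by norm_num)
    exact h1.const_mul κ
  have hGderiv : deriv G = fun t => deriv F t + κ * (2*t + 2*c) := by
    funext t
    exact (((hFd t).hasDerivAt).add (hpoly t)).deriv
  have hGderiv2 : deriv (deriv G) 0 = deriv (deriv F) 0 + 2 * κ := by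
    rw [hGderiv]
    have h2 : HasDerivAt (fun t : ℝ => κ * (2*t + 2*c)) (κ * 2) 0 := by
      have : HasDerivAt (fun t : ℝ => 2*t + 2*c) 2 0 := by
        simpa using ((hasDerivAt_id (0:ℝ)).const_mul 2).add_const (2*c)
      exact this.const_mul κ
    rw [deriv_fun_add hFd' h2.differentiableAt, h2.deriv]
    ring
  have hsd := aux_second_deriv_test hGmin hGsmooth
  have : pdXX n i u (px, py) = deriv (deriv F) 0 := rfl
  rw [this]
  linarith [hsd.2, hGderiv2 ▸ hsd.2]

lemma aux_vert (a : ℝ) (ha1 : 0 < a + 1) (ha2 : a < 1)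
    (u : EuclideanSpace ℝ (Fin n) × ℝ → ℝ)
    (husmooth : ContDiffOn ℝ 2 u {q : EuclideanSpace ℝ (Fin n) × ℝ | 0 < q.2})
    (px : EuclideanSpace ℝ (Fin n)) (py : ℝ) (hY : 0 < py) (C₀ c₂ γ : ℝ)
    (hmin : IsLocalMin (fun t : ℝ => u (px, t) + (C₀ - c₂*t^2 + γ*t^(1-a))) py) :
    2*c₂*(a+1)*py^a ≤ deriv (fun t : ℝ => t ^ a * pdY n u (px, t)) py := by
  set h : ℝ → ℝ := fun t => u (px, t) with hh_def
  set e : ℝ := 1 - a with he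
  set φ : ℝ → ℝ := fun t => C₀ - c₂*t^2 + γ*t^e with hφ_def
  set Ψ : ℝ → ℝ := fun t => h t + φ t with hΨ_def
  have hΨmin : IsLocalMin Ψ py := hmin
  -- smoothness of h along the vertical line
  have hhsm : ∀ t : ℝ, 0 < t → ContDiffAt ℝ 2 h t := by
    intro t ht
    exact aux_line_smooth n u husmooth (fun t : ℝ => (px, t))
      (contDiff_const.prodMk contDiff_id) t ht
  have hhd : ∀ t : ℝ, 0 < t → DifferentiableAt ℝ h t :=
    fun t ht => (hhsm t ht).differentiableAt (by norm_num)
  -- derivative of φ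
  have hφd : ∀ t : ℝ, 0 < t →
      HasDerivAt φ (γ*(e*t^(e-1)) - c₂*(2*t)) t := by
    intro t ht
    have h1 : HasDerivAt (fun t : ℝ => C₀ - c₂*t^2)  (-(c₂*(2*t))) t := by
      have := ((hasDerivAt_pow 2 t).const_mul c₂).const_sub C₀
      simpa using this
    have h2 : HasDerivAt (fun t : ℝ => γ*t^e) (γ*(e*t^(e-1))) t :=
      (Real.hasDerivAt_rpow_const (Or.inl ht.ne')).const_mul γ
    have := h1.add h2
    have heq : -(c₂*(2*t)) + γ*(e*t^(e-1)) = γ*(e*t^(e-1)) - c₂*(2*t) := by ring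
    exact heq ▸ this
  -- smoothness of Ψ at py
  have hΨsm : ContDiffAt ℝ 2 Ψ py := by
    apply (hhsm py hY).add
    apply ContDiffAt.add
    · exact contDiffAt_const.sub (contDiffAt_const.mul (contDiffAt_id.pow 2))
    · exact contDiffAt_const.mul (Real.contDiffAt_rpow_const_of_ne hY.ne')
  have hsd := aux_second_deriv_test hΨmin hΨsm
  set ψ'' : ℝ := deriv (deriv Ψ) py with hψ''
  have hΨd' : HasDerivAt (deriv Ψ) ψ'' py := ((aux_contDiffAt_two hΨsm).2).hasDerivAt
  -- rewrite deriv h in terms of deriv Ψ near py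
  have hkey : (fun t : ℝ => t ^ a * pdY n u (px, t)) =ᶠ[𝓝 py]
      (fun t : ℝ => t ^ a * (deriv Ψ t - (γ*(e*t^(e-1)) - c₂*(2*t)))) := by
    filter_upwards [Ioi_mem_nhds hY] with t (ht : 0 < t)
    have hΨt : HasDerivAt Ψ (deriv h t + (γ*(e*t^(e-1)) - c₂*(2*t))) t :=
      ((hhd t ht).hasDerivAt).add (hφd t ht)
    have : deriv Ψ t = deriv h t + (γ*(e*t^(e-1)) - c₂*(2*t)) := hΨt.deriv
    have hpd : pdY n u (px, t) = deriv h t := rfl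
    rw [hpd, this]
    ring
  rw [hkey.deriv_eq]
  -- compute the derivative of the RHS at py
  have h1 : HasDerivAt (fun t : ℝ => t^a) (a * py^(a-1)) py :=
    Real.hasDerivAt_rpow_const (Or.inl hY.ne')
  have h2 : HasDerivAt (fun t : ℝ => γ*(e*t^(e-1)) - c₂*(2*t))
      (γ*(e*((e-1) * py^(e-1-1))) - c₂*2) py := by
    have ha : HasDerivAt (fun t : ℝ => γ*(e*t^(e-1)))
        (γ*(e*((e-1) * py^(e-1-1)))) py :=
      (((Real.hasDerivAt_rpow_const (p := e-1) (Or.inl hY.ne'))).const_mul e).const_mul γ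
    have hb : HasDerivAt (fun t : ℝ => c₂*(2*t)) (c₂*2) py := by
      simpa using ((hasDerivAt_id py).const_mul 2).const_mul c₂
    exact ha.sub hb
  have h3 : HasDerivAt (fun t : ℝ => deriv Ψ t - (γ*(e*t^(e-1)) - c₂*(2*t)))
      (ψ'' - (γ*(e*((e-1) * py^(e-1-1))) - c₂*2)) py := hΨd'.sub h2
  have h4 := HasDerivAt.deriv (f := fun t : ℝ => t ^ a * (deriv Ψ t - (γ*(e*t^(e-1)) - c₂*(2*t)))) (h1.mul h3)
  rw [h4, hsd.1]
  -- now pure rpow algebra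
  have hA : 0 < py ^ a := Real.rpow_pos_of_pos hY a
  have e1 : py^(a-1) = py^a / py := by
    rw [Real.rpow_sub hY, Real.rpow_one]
  have e2 : py^(e-1) = (py^a)⁻¹ := by
    rw [show e - 1 = -a by rw [he]; ring, Real.rpow_neg hY.le]
  have e3 : py^(e-1-1) = (py^a * py)⁻¹ := by
    rw [show e - 1 - 1 = -(a+1) by rw [he]; ring, Real.rpow_neg hY.le,
      Real.rpow_add hY, Real.rpow_one]
  rw [e1, e2, e3, he]
  have hψ''pos : 0 ≤ py^a * ψ'' := mul_nonneg hA.le hsd.2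
  have hfinal : a * (py^a / py) * (0 - (γ*((1-a)*(py^a)⁻¹) - c₂*(2*py)))
      + py^a * (ψ'' - (γ*((1-a)*(((1-a)-1) * (py^a * py)⁻¹)) - c₂*2))
      = 2*c₂*(a+1)*py^a + py^a * ψ'' := by
    field_simp
    ring
  rw [hfinal]
  linarith

set_option maxHeartbeats 1000000 in
lemma aux_slab (a : ℝ) (ha1 : 0 < a + 1) (ha2 : a < 1)
    (u : EuclideanSpace ℝ (Fin n) × ℝ → ℝ)
    (hucont : ContinuousOn u {q : EuclideanSpace ℝ (Fin n) × ℝ | 0 ≤ q.2})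
    (husmooth : ContDiffOn ℝ 2 u {q : EuclideanSpace ℝ (Fin n) × ℝ | 0 < q.2})
    (heq : ∀ q : EuclideanSpace ℝ (Fin n) × ℝ, 0 < q.2 →
      q.2 ^ a * (∑ i : Fin n, pdXX n i u q) +
        deriv (fun t : ℝ => t ^ a * pdY n u (q.1, t)) q.2 = 0)
    (M : ℝ) (hM : ∀ q : EuclideanSpace ℝ (Fin n) × ℝ, 0 ≤ q.2 → |u q| ≤ M)
    (ε δ γ c₂ T b : ℝ) (hδ : 0 < δ) (hεδ : δ < ε) (hγ : 0 ≤ γ) (hT : 0 < T)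
    (hc₂ : c₂ = ε * n / (a+1) + δ)
    (hbot : ∀ x : EuclideanSpace ℝ (Fin n), b ≤ u (x,0) + (ε-δ)*‖x‖^2)
    (htop : ∀ x : EuclideanSpace ℝ (Fin n),
      b ≤ u (x,T) + (ε-δ)*‖x‖^2 - c₂*T^2 + γ*T^(1-a))
    (qh : EuclideanSpace ℝ (Fin n) × ℝ) (hq1 : 0 ≤ qh.2) (hq2 : qh.2 ≤ T) :
    b ≤ u qh + (ε-δ)*‖qh.1‖^2 - c₂*qh.2^2 + γ*qh.2^(1-a) := by
  have h1a : (0:ℝ) < 1 - a := by linarith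
  set κ : ℝ := ε - δ with hκdef
  have hκ : 0 < κ := by simp [hκdef]; linarith
  set W : EuclideanSpace ℝ (Fin n) × ℝ → ℝ :=
    fun q => u q + κ*‖q.1‖^2 - c₂*q.2^2 + γ*q.2^(1-a) with hW
  show b ≤ W qh
  -- continuity of W on the closed half-space
  have hWcont : ContinuousOn W {q : EuclideanSpace ℝ (Fin n) × ℝ | 0 ≤ q.2} := by
    apply ContinuousOn.add
    · apply ContinuousOn.sub
      · apply hucont.add
        exact (continuous_const.mul ((continuous_fst.norm).pow 2)).continuousOn
      · exact (continuous_const.mul ((continuous_snd).pow 2)).continuousOn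
    · intro q hq
      have hr : ContinuousAt (fun y : ℝ => y^(1-a)) q.2 :=
        Real.continuousAt_rpow_const _ _ (Or.inr h1a.le)
      exact (continuousAt_const.mul (hr.comp continuous_snd.continuousAt)).continuousWithinAt
  -- compactness of the sublevel set
  set Bn : ℝ := |W qh| + M + |c₂| *T^2 with hBn
  set R : ℝ := max 1 (Bn/κ) with hR
  set S : Set (EuclideanSpace ℝ (Fin n) × ℝ) :=
    {q | (0 ≤ q.2 ∧ q.2 ≤ T) ∧ W q ≤ W qh} with hS
  have hSTclosed : IsClosed {q : EuclideanSpace ℝ (Fin n) × ℝ | 0 ≤ q.2 ∧ q.2 ≤ T} := by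
    have : {q : EuclideanSpace ℝ (Fin n) × ℝ | 0 ≤ q.2 ∧ q.2 ≤ T}
        = (fun q : EuclideanSpace ℝ (Fin n) × ℝ => q.2) ⁻¹' (Icc 0 T) := rfl
    rw [this]
    exact isClosed_Icc.preimage continuous_snd
  have hSclosed : IsClosed S := by
    have := (hWcont.mono (fun q (hq : 0 ≤ q.2 ∧ q.2 ≤ T) => hq.1)).preimage_isClosed_of_isClosed
      hSTclosed (isClosed_Iic (a := W qh))
    exact this
  have hSsub : S ⊆ (Metric.closedBall (0:EuclideanSpace ℝ (Fin n)) R) ×ˢ Icc (0:ℝ) T := by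
    rintro q ⟨⟨hq01, hq0T⟩, hqW⟩
    constructor
    · simp only [Metric.mem_closedBall, dist_zero_right]
      have hu : -M ≤ u q := by have := hM q hq01; rw [abs_le] at this; exact this.1
      have hsq : q.2^2 ≤ T^2 := by nlinarith
      have hrnn : 0 ≤ γ*q.2^(1-a) := mul_nonneg hγ (Real.rpow_nonneg hq01 _)
      have hWl : W q ≤ |W qh| := hqW.trans (le_abs_self _)
      have hc₂b : -(|c₂| *T^2) ≤ -(c₂*q.2^2) := by
        have h1 : c₂*q.2^2 ≤ |c₂| *T^2 := by
          calc c₂*q.2^2 ≤ |c₂| *q.2^2 := by nlinarith [le_abs_self c₂, sq_nonneg q.2]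
          _ ≤ |c₂| *T^2 := by nlinarith [abs_nonneg c₂]
        linarith
      have hκn : κ*‖q.1‖^2 ≤ Bn := by
        simp only [hW] at hWl
        simp only [hBn]
        nlinarith
      have h2 : ‖q.1‖^2 ≤ Bn/κ := by
        rw [le_div_iff₀ hκ]
        linarith [hκn]
      rcases le_or_gt ‖q.1‖ 1 with h | h
      · exact h.trans (le_max_left _ _)
      · have : ‖q.1‖ ≤ ‖q.1‖^2 := le_self_pow₀ h.le (by norm_num)
        exact (this.trans h2).trans (le_max_right _ _)
    · exact ⟨hq01, hq0T⟩
  have hScpt : IsCompact S :=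
    ((isCompact_closedBall _ _).prod isCompact_Icc).of_isClosed_subset hSclosed hSsub
  have hqhS : qh ∈ S := ⟨⟨hq1, hq2⟩, le_refl _⟩
  obtain ⟨p, hpS, hpmin⟩ := hScpt.exists_isMinOn ⟨qh, hqhS⟩
    (hWcont.mono (fun q hq => hq.1.1))
  have hmin : ∀ q : EuclideanSpace ℝ (Fin n) × ℝ, 0 ≤ q.2 → q.2 ≤ T → W p ≤ W q := by
    intro q hq01 hq0T
    by_cases hc : W q ≤ W qh
    · exact hpmin ⟨⟨hq01, hq0T⟩, hc⟩
    · exact (hpmin hqhS).trans (le_of_not_ge hc)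
  obtain ⟨px, py⟩ := p
  obtain ⟨⟨hpy0, hpyT⟩, -⟩ := hpS
  rcases eq_or_lt_of_le hpy0 with hpy | hpy
  · -- bottom case
    have : W (px, 0) = u (px, 0) + κ*‖px‖^2 := by
      simp [hW, Real.zero_rpow h1a.ne']
    have hb : b ≤ W (px, 0) := by rw [this]; exact hbot px
    have hpy0' : py = 0 := hpy.symm
    calc b ≤ W (px, 0) := hb
    _ = W (px, py) := by rw [hpy0']
    _ ≤ W qh := hmin qh hq1 hq2
  rcases eq_or_lt_of_le hpyT with hpy' | hpy'
  · -- top case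
    have : W (px, T) = u (px, T) + κ*‖px‖^2 - c₂*T^2 + γ*T^(1-a) := rfl
    have hb : b ≤ W (px, T) := by rw [this]; exact htop px
    have hpyT' : py = T := hpy'
    calc b ≤ W (px, T) := hb
    _ = W (px, py) := by rw [hpyT']
    _ ≤ W qh := hmin qh hq1 hq2
  -- interior case : contradiction
  exfalso
  have hY : 0 < py := hpy
  -- horizontal second derivatives
  have hXX : ∀ i : Fin n, 0 ≤ pdXX n i u (px, py) + 2 * κ := by
    intro i
    apply aux_horiz n u husmooth px py hY κ i
    intro t
    have h2 := hmin (px + t • EuclideanSpace.single i (1:ℝ), py) hY.le hpyT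
    simp [hW] at h2
    linarith
  -- vertical part
  have hV : 2*c₂*(a+1)*py^a ≤ deriv (fun t : ℝ => t ^ a * pdY n u (px, t)) py := by
    apply aux_vert n a ha1 ha2 u husmooth px py hY (κ*‖px‖^2) c₂ γ
    have hppp : ∀ᶠ t in 𝓝 py, t ∈ Ioo (0:ℝ) T := Ioo_mem_nhds hY hpy'
    have hE : ∀ᶠ t in 𝓝 py,
        (fun t : ℝ => u (px, t) + (κ*‖px‖^2 - c₂*t^2 + γ*t^(1-a))) py ≤
        (fun t : ℝ => u (px, t) + (κ*‖px‖^2 - c₂*t^2 + γ*t^(1-a))) t := by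
      filter_upwards [hppp] with t ht
      have h2 := hmin (px, t) ht.1.le ht.2.le
      simp [hW] at h2
      linarith
    exact hE
  -- the equation
  have heqp := heq (px, py) hY
  have hA : 0 < py ^ a := Real.rpow_pos_of_pos hY a
  have hsum : -((n:ℝ) * (2*κ)) ≤ ∑ i : Fin n, pdXX n i u (px, py) := by
    have h1 : ∀ i ∈ Finset.univ, -(2*κ) ≤ pdXX n i u (px, py) := by
      intro i _
      linarith [hXX i]
    have := Finset.sum_le_sum h1
    simp only [Finset.sum_const, Finset.card_univ, Fintype.card_fin, nsmul_eq_mul] at this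
    linarith [this]
  have hterm : py^a * (-((n:ℝ) * (2*κ))) ≤ py^a * (∑ i : Fin n, pdXX n i u (px, py)) :=
    mul_le_mul_of_nonneg_left hsum hA.le
  have hc₂' : c₂ * (a+1) = ε * n + δ * (a+1) := by
    rw [hc₂]
    field_simp
  have h2 : 2*c₂*(a+1)*py^a ≤ py^a * ((n:ℝ)*(2*κ)) := by
    have hD : deriv (fun t : ℝ => t ^ a * pdY n u (px, t)) py
        = -(py^a * (∑ i : Fin n, pdXX n i u (px, py))) := by linarith [heqp]
    linarith [hV, hterm, hD]
  have h5 : 2*(ε*(n:ℝ) + δ*(a+1))*py^a ≤ py^a*((n:ℝ)*(2*(ε-δ))) := by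
    have he1 : 2*c₂*(a+1)*py^a = 2*(ε*(n:ℝ) + δ*(a+1))*py^a := by
      rw [hc₂]
      field_simp
    rw [he1] at h2
    rw [hκdef] at h2
    exact h2
  nlinarith [h5, mul_pos hδ hA, mul_pos (mul_pos hδ hA) ha1,
    mul_nonneg (mul_nonneg hδ.le hA.le) (Nat.cast_nonneg n)]

lemma aux_lower (a : ℝ) (ha1 : 0 < a + 1) (ha2 : a < 1)
    (u : EuclideanSpace ℝ (Fin n) × ℝ → ℝ)
    (hucont : ContinuousOn u {q : EuclideanSpace ℝ (Fin n) × ℝ | 0 ≤ q.2})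
    (husmooth : ContDiffOn ℝ 2 u {q : EuclideanSpace ℝ (Fin n) × ℝ | 0 < q.2})
    (heq : ∀ q : EuclideanSpace ℝ (Fin n) × ℝ, 0 < q.2 →
      q.2 ^ a * (∑ i : Fin n, pdXX n i u q) +
        deriv (fun t : ℝ => t ^ a * pdY n u (q.1, t)) q.2 = 0)
    (M : ℝ) (hM : ∀ q : EuclideanSpace ℝ (Fin n) × ℝ, 0 ≤ q.2 → |u q| ≤ M)
    (b : ℝ) (hb : ∀ x : EuclideanSpace ℝ (Fin n), b ≤ u (x, 0)) :
    ∀ q : EuclideanSpace ℝ (Fin n) × ℝ, 0 ≤ q.2 → b ≤ u q := by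
  have h1a : (0:ℝ) < 1 - a := by linarith
  have hM0 : 0 ≤ M := (abs_nonneg _).trans (hM (0, 0) le_rfl)
  have hbM : b ≤ M := by
    have h1 := hb 0
    have h2 := hM (0, 0) le_rfl
    rw [abs_le] at h2
    exact h1.trans h2.2
  intro qh hq1
  by_contra hcon
  push_neg at hcon
  set τ : ℝ := (b - u qh)/4 with hτdef
  have hτ : 0 < τ := by simp only [hτdef]; linarith
  set P : ℝ := 2*(n:ℝ)/(a+1) + 1 with hPdef
  have hP : 0 < P := by
    have : (0:ℝ) ≤ 2*(n:ℝ)/(a+1) := by positivity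
    simp only [hPdef]; linarith
  -- choose T large
  have e1 : Tendsto (fun T:ℝ => T^2) atTop atTop := tendsto_pow_atTop two_ne_zero
  have e2 : Tendsto (fun T:ℝ => T^(1-a)) atTop atTop := tendsto_rpow_atTop h1a
  have hev := ((e1.eventually_ge_atTop ((M - b + τ)*‖qh.1‖^2/(τ*P))).and
    ((e2.eventually_ge_atTop ((2*M+τ)*qh.2^(1-a)/τ)).and
      (eventually_ge_atTop (max 1 qh.2)))).exists
  obtain ⟨T, hT1, hT2, hT3⟩ := hev
  have hT0 : (0:ℝ) < T := lt_of_lt_of_le one_pos ((le_max_left _ _).trans hT3)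
  have hqT : qh.2 ≤ T := (le_max_right _ _).trans hT3
  have hTa : (0:ℝ) < T^(1-a) := Real.rpow_pos_of_pos hT0 _
  set δ : ℝ := (M - b + τ)/(T^2*P) with hδdef
  have hδ : 0 < δ := by
    apply div_pos (by linarith) (by positivity)
  set γ : ℝ := (2*M+τ)/T^(1-a) with hγdef
  have hγ : 0 ≤ γ := by positivity
  set c₂ : ℝ := (2*δ) * n / (a+1) + δ with hc₂def
  have hc₂P : c₂ = δ * P := by
    simp only [hc₂def, hPdef]
    field_simp
  have hc₂pos : 0 ≤ c₂ := by
    rw [hc₂P]; positivity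
  have hc₂T : c₂*T^2 = M - b + τ := by
    rw [hc₂P, hδdef]
    field_simp
  have hγT : γ*T^(1-a) = 2*M+τ := by
    rw [hγdef]
    exact div_mul_cancel₀ _ hTa.ne'
  -- apply the slab estimate
  have hbot : ∀ x : EuclideanSpace ℝ (Fin n), b ≤ u (x,0) + (2*δ-δ)*‖x‖^2 := by
    intro x
    have h1 := hb x
    have h2 : 0 ≤ (2*δ-δ)*‖x‖^2 := by nlinarith [sq_nonneg ‖x‖, hδ.le]
    linarith
  have htop : ∀ x : EuclideanSpace ℝ (Fin n),
      b ≤ u (x,T) + (2*δ-δ)*‖x‖^2 - c₂*T^2 + γ*T^(1-a) := by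
    intro x
    have h1 := hM (x, T) hT0.le
    rw [abs_le] at h1
    have h2 : 0 ≤ (2*δ-δ)*‖x‖^2 := by nlinarith [sq_nonneg ‖x‖, hδ.le]
    rw [hc₂T, hγT]
    linarith [h1.1]
  have hslab := aux_slab n a ha1 ha2 u hucont husmooth heq M hM (2*δ) δ γ c₂ T b hδ
    (by linarith) hγ hT0 hc₂def hbot htop qh hq1 hqT
  -- estimate the error terms
  have herr1 : δ*‖qh.1‖^2 ≤ τ := by
    rw [hδdef, div_mul_eq_mul_div, div_le_iff₀ (by positivity)]
    calc (M - b + τ) * ‖qh.1‖^2 = (M - b + τ)*‖qh.1‖^2/(τ*P) * (τ*P) := by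
          field_simp
    _ ≤ T^2 * (τ*P) := by
          apply mul_le_mul_of_nonneg_right hT1 (by positivity)
    _ = τ * (T^2*P) := by ring
  have herr2 : γ*qh.2^(1-a) ≤ τ := by
    rw [hγdef, div_mul_eq_mul_div, div_le_iff₀ hTa]
    calc (2*M+τ) * qh.2^(1-a) = (2*M+τ)*qh.2^(1-a)/τ * τ := by field_simp
    _ ≤ T^(1-a) * τ := mul_le_mul_of_nonneg_right hT2 hτ.le
    _ = τ * T^(1-a) := by ring
  have herr3 : 0 ≤ c₂*qh.2^2 := by positivity
  have : b ≤ u qh + 2*τ := by linarith [hslab]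
  simp only [hτdef] at this
  linarith

/-- Maximum principle: let `u` be continuous and bounded on the closed half-space with
`y^a u_y` continuous up to `{y=0}`, solving `div(y^a∇u) = 0` for `y > 0`, with
`∂u/∂ν^a + d(x)u ≥ 0` on `{y=0}` for bounded `d`, trace `u(x,0) → 0` as `|x| → ∞`,
`u(·,0) > 0` on a nonempty set `H` and `d ≥ 0` off `H`. Assuming in addition the strong
maximum principle and the Hopf lemma for `L_a` (as instantiated hypotheses), one has
`u > 0` on the closed half-space. -/
theorem max_principle_with_hopf (s a : ℝ) (hs : s ∈ Ioo (0 : ℝ) 1) (ha : a = 1 - 2 * s)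
    (f : ℝ → ℝ) (hf : LocallyLipschitz f)
    (u : EuclideanSpace ℝ (Fin n) × ℝ → ℝ)
    (d : EuclideanSpace ℝ (Fin n) → ℝ) (νa : EuclideanSpace ℝ (Fin n) → ℝ)
    (H : Set (EuclideanSpace ℝ (Fin n)))
    (hucont : ContinuousOn u {q : EuclideanSpace ℝ (Fin n) × ℝ | 0 ≤ q.2})
    (hubdd : ∃ M : ℝ, ∀ q : EuclideanSpace ℝ (Fin n) × ℝ, 0 ≤ q.2 → |u q| ≤ M)
    (husmooth : ContDiffOn ℝ 2 u {q : EuclideanSpace ℝ (Fin n) × ℝ | 0 < q.2})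
    -- the equation `div(y^a ∇u) = 0` in the open half-space
    (heq : ∀ q : EuclideanSpace ℝ (Fin n) × ℝ, 0 < q.2 →
      q.2 ^ a * (∑ i : Fin n, pdXX n i u q) +
        deriv (fun t : ℝ => t ^ a * pdY n u (q.1, t)) q.2 = 0)
    -- `νa = ∂u/∂ν^a` is the conormal derivative, continuous up to the boundary
    (hνa : ∀ x : EuclideanSpace ℝ (Fin n),
      Tendsto (fun y : ℝ => -(y ^ a * pdY n u (x, y))) (𝓝[>] 0) (𝓝 (νa x)))
    (hext : ContinuousOn (fun q : EuclideanSpace ℝ (Fin n) × ℝ =>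
        if 0 < q.2 then q.2 ^ a * pdY n u q else -(νa q.1))
      {q : EuclideanSpace ℝ (Fin n) × ℝ | 0 ≤ q.2})
    -- the boundary inequality `∂u/∂ν^a + d(x)u ≥ 0`
    (hbdry : ∀ x : EuclideanSpace ℝ (Fin n), 0 ≤ νa x + d x * u (x, 0))
    (hdbdd : ∃ D : ℝ, ∀ x, |d x| ≤ D)
    -- `u(x,0) → 0` as `|x| → ∞`
    (hlim : ∀ ε : ℝ, 0 < ε → ∃ K : ℝ, ∀ x : EuclideanSpace ℝ (Fin n), K ≤ ‖x‖ →
      |u (x, 0)| ≤ ε)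
    (hH : H.Nonempty)
    (hpos : ∀ x ∈ H, 0 < u (x, 0))
    (hd : ∀ x ∉ H, 0 ≤ d x)
    -- strong maximum principle: a minimum at an interior point forces `u` constant
    (hSMP : ∀ q : EuclideanSpace ℝ (Fin n) × ℝ, 0 < q.2 →
      (∀ q' : EuclideanSpace ℝ (Fin n) × ℝ, 0 ≤ q'.2 → u q ≤ u q') →
      ∃ c : ℝ, ∀ q' : EuclideanSpace ℝ (Fin n) × ℝ, 0 ≤ q'.2 → u q' = c)
    -- Hopf lemma: at a boundary minimum of a nonconstant solution, `∂u/∂ν^a < 0`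
    (hHopf : ∀ x₀ : EuclideanSpace ℝ (Fin n),
      (∀ q' : EuclideanSpace ℝ (Fin n) × ℝ, 0 ≤ q'.2 → u (x₀, 0) ≤ u q') →
      (¬ ∃ c : ℝ, ∀ q' : EuclideanSpace ℝ (Fin n) × ℝ, 0 ≤ q'.2 → u q' = c) →
      νa x₀ < 0) :
    ∀ q : EuclideanSpace ℝ (Fin n) × ℝ, 0 ≤ q.2 → 0 < u q := by
  obtain ⟨hs0, hs1⟩ := hs
  have ha1 : 0 < a + 1 := by rw [ha]; linarith
  have ha2 : a < 1 := by rw [ha]; linarith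
  obtain ⟨M, hM⟩ := hubdd
  obtain ⟨xH, hxH⟩ := hH
  -- trace continuity
  have hg : Continuous (fun x : EuclideanSpace ℝ (Fin n) => u (x, 0)) := by
    exact hucont.comp_continuous (continuous_id.prodMk continuous_const)
      (fun x => by simp only [mem_setOf_eq]; exact le_rfl)
  -- a global minimum point with nonpositive value gives a contradiction
  have hminFalse : ∀ p : EuclideanSpace ℝ (Fin n) × ℝ, 0 ≤ p.2 → u p ≤ 0 →
      (∀ q' : EuclideanSpace ℝ (Fin n) × ℝ, 0 ≤ q'.2 → u p ≤ u q') → False := by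
    intro p hp2 hp0 hpmin
    by_cases hconst : ∃ c : ℝ, ∀ q' : EuclideanSpace ℝ (Fin n) × ℝ, 0 ≤ q'.2 → u q' = c
    · obtain ⟨c, hc⟩ := hconst
      have h1 : u (xH, 0) = c := hc (xH, 0) le_rfl
      have h2 := hpos xH hxH
      have h3 : u p = c := hc p hp2
      linarith
    rcases eq_or_lt_of_le hp2 with h0 | h0
    · -- boundary minimum
      have hpe : (p.1, (0:ℝ)) = p := by rw [h0]
      have hp' : ∀ q' : EuclideanSpace ℝ (Fin n) × ℝ, 0 ≤ q'.2 → u (p.1, 0) ≤ u q' := by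
        intro q' h
        rw [hpe]
        exact hpmin q' h
      have hHopf' := hHopf p.1 hp' hconst
      have hup : u (p.1, 0) ≤ 0 := by rw [hpe]; exact hp0
      have hxnH : p.1 ∉ H := by
        intro hmem
        have := hpos p.1 hmem
        linarith
      have hd' := hd p.1 hxnH
      have hb := hbdry p.1
      nlinarith
    · -- interior minimum
      exact hconst (hSMP p h0 hpmin)
  intro q hq
  by_contra hup
  push_neg at hup
  by_cases hcase : ∀ x : EuclideanSpace ℝ (Fin n), 0 ≤ u (x, 0)
  · -- nonnegative trace : u ≥ 0 everywhere, so u q = 0 is a global min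
    have hlow := aux_lower n a ha1 ha2 u hucont husmooth heq M hM 0 hcase
    have huq0 : u q = 0 := le_antisymm hup (hlow q hq)
    exact hminFalse q hq hup (fun q' h => huq0 ▸ hlow q' h)
  · -- negative somewhere on the trace : the trace attains its min
    push_neg at hcase
    obtain ⟨x₁, hx₁⟩ := hcase
    obtain ⟨K, hK⟩ := hlim (-u (x₁, 0)/2) (by linarith)
    set K' : ℝ := max K ‖x₁‖ with hK'def
    have hx₁mem : x₁ ∈ Metric.closedBall (0 : EuclideanSpace ℝ (Fin n)) K' := by
      simp only [Metric.mem_closedBall, dist_zero_right]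
      exact le_max_right _ _
    obtain ⟨xm, hxmmem, hxmmin⟩ := (isCompact_closedBall (0 : EuclideanSpace ℝ (Fin n))
      K').exists_isMinOn ⟨x₁, hx₁mem⟩ hg.continuousOn
    have hxm₁ : u (xm, 0) ≤ u (x₁, 0) := hxmmin hx₁mem
    have hglob : ∀ x : EuclideanSpace ℝ (Fin n), u (xm, 0) ≤ u (x, 0) := by
      intro x
      by_cases hx : x ∈ Metric.closedBall (0 : EuclideanSpace ℝ (Fin n)) K'
      · exact hxmmin hx
      · have hxn : K ≤ ‖x‖ := by
          simp only [Metric.mem_closedBall, dist_zero_right, not_le] at hx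
          exact le_of_lt (lt_of_le_of_lt (le_max_left _ _) hx)
        have := hK x hxn
        rw [abs_le] at this
        linarith [this.1]
    have hlow := aux_lower n a ha1 ha2 u hucont husmooth heq M hM (u (xm, 0)) hglob
    exact hminFalse (xm, 0) le_rfl (by linarith) (fun q' h => hlow q' h)


end
end
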